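/- There exists a fusion Riesz basis for ℝ³ that admits an alternate dual fusion frame distinct from its canonical dual, and that alternate dual is not a fusion Riesz basis. Concretely: W₁ = span{(1,0,0)}, W₂ = span{(1,1,0)}, W₃ = span{(0,0,1)} with weights 1 form a fusion Riesz basis, and V₁ = ℝ²×{0}, V₂ = span{(0,1,0)}, V₃ = span{(0,0,1)} with weights 1 satisfy Σ π_{V_i} S_W⁻¹ π_{W_i} f = f for all f ∈ ℝ³, yet {V_i} is not a fusion Riesz basis. -/

import Mathlib

open scoped InnerProductSpace

/-- Orthogonal projection onto a complete subspace of a real Hilbert space. -/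
noncomputable def fusionProjR {H : Type*} [NormedAddCommGroup H] [InnerProductSpace ℝ H]
    (K : Submodule ℝ H) [CompleteSpace K] : H →L[ℝ] H :=
  K.subtypeL.comp (K.orthogonalProjectionOnto)

/-- Fusion Riesz basis (weight one) over `ℝ`. -/
def IsFusionRieszBasisR {H : Type*} [NormedAddCommGroup H] [InnerProductSpace ℝ H]
    {ι : Type*} (W : ι → Submodule ℝ H) : Prop :=
  (⨆ i, W i).topologicalClosure = ⊤ ∧
  ∃ C D : ℝ, 0 < C ∧ C ≤ D ∧
    ∀ (J : Finset ι) (f : ι → H), (∀ j, f j ∈ W j) →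
      C * Real.sqrt (∑ j ∈ J, ‖f j‖ ^ 2) ≤ ‖∑ j ∈ J, f j‖ ∧
        ‖∑ j ∈ J, f j‖ ≤ D * Real.sqrt (∑ j ∈ J, ‖f j‖ ^ 2)

noncomputable abbrev Efr := EuclideanSpace ℝ (Fin 3)

noncomputable def swLin : Efr ≃ₗ[ℝ] Efr where
  toFun f := WithLp.toLp 2 ![(3*f 0 + f 1)/2, (f 0 + f 1)/2, f 2]
  invFun f := WithLp.toLp 2 ![f 0 - f 1, -(f 0) + 3*f 1, f 2]
  map_add' f g := by
    ext i; fin_cases i <;> simp [PiLp.add_apply] <;> ring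
  map_smul' c f := by
    ext i; fin_cases i <;> simp [PiLp.smul_apply, smul_eq_mul] <;> ring
  left_inv f := by
    ext i; fin_cases i <;> simp <;> ring
  right_inv f := by
    ext i; fin_cases i <;> simp <;> ring

noncomputable def swCLE : Efr ≃L[ℝ] Efr := swLin.toContinuousLinearEquiv

lemma swCLE_apply (f : Efr) : swCLE f = ![(3*f 0 + f 1)/2, (f 0 + f 1)/2, f 2] := rfl

lemma swCLE_symm_apply (f : Efr) :
    swCLE.symm f = ![f 0 - f 1, -(f 0) + 3*f 1, f 2] := rfl

lemma fusionProjR_apply {H : Type*} [NormedAddCommGroup H] [InnerProductSpace ℝ H]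
    (K : Submodule ℝ H) [CompleteSpace K] (f : H) :
    fusionProjR K f = K.starProjection f := rfl

lemma fusionProjR_of_mem {H : Type*} [NormedAddCommGroup H] [InnerProductSpace ℝ H]
    (K : Submodule ℝ H) [CompleteSpace K] {f : H} (hf : f ∈ K) :
    fusionProjR K f = f := by
  rw [fusionProjR_apply]
  exact K.starProjection_eq_self_iff.mpr hf

noncomputable abbrev eb (i : Fin 3) : Efr := EuclideanSpace.single i (1 : ℝ)

lemma inner_eb (i : Fin 3) (f : Efr) : ⟪eb i, f⟫_ℝ = f i := by
  simp [EuclideanSpace.inner_single_left]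

lemma proj_e (i : Fin 3) (f : Efr) :
    fusionProjR (Submodule.span ℝ {eb i}) f = (f i) • eb i := by
  rw [fusionProjR_apply]
  rw [Submodule.starProjection_singleton ℝ f, inner_eb]
  norm_num

lemma norm_sq_e01 : ‖eb 0 + eb 1‖ ^ 2 = 2 := by
  rw [@norm_add_sq_real]
  simp [inner_eb, EuclideanSpace.single_apply]
  norm_num

lemma proj_e01 (f : Efr) :
    fusionProjR (Submodule.span ℝ {eb 0 + eb 1}) f = ((f 0 + f 1) / 2) • (eb 0 + eb 1) := by
  rw [fusionProjR_apply]
  rw [Submodule.starProjection_singleton ℝ f, inner_add_left, inner_eb, inner_eb, norm_sq_e01]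
  norm_num

lemma sqrt_mul_le_sqrt {c p q : ℝ} (hc : 0 ≤ c) (h : c ^ 2 * p ≤ q) :
    c * Real.sqrt p ≤ Real.sqrt q := by
  have : c * Real.sqrt p = Real.sqrt (c ^ 2 * p) := by
    rw [Real.sqrt_mul (by positivity), Real.sqrt_sq hc]
  rw [this]
  exact Real.sqrt_le_sqrt h

lemma normW_eq (a b c : ℝ) :
    ‖a • eb 0 + b • (eb 0 + eb 1) + c • eb 2‖ = Real.sqrt ((a + b) ^ 2 + b ^ 2 + c ^ 2) := by
  rw [EuclideanSpace.norm_eq]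
  congr 1
  rw [Fin.sum_univ_three]
  simp [EuclideanSpace.single_apply, Real.norm_eq_abs, sq_abs]

lemma sup_W_top :
    (⨆ i, (![Submodule.span ℝ {eb 0}, Submodule.span ℝ {eb 0 + eb 1},
      Submodule.span ℝ {eb 2}] : Fin 3 → Submodule ℝ Efr) i) = ⊤ := by
  rw [eq_top_iff]
  intro x _
  have hx : x = (x 0 - x 1) • eb 0 + (x 1) • (eb 0 + eb 1) + (x 2) • eb 2 := by
    ext i; fin_cases i <;>
      simp [EuclideanSpace.single_apply] <;> ring
  rw [hx]
  refine add_mem (add_mem ?_ ?_) ?_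
  · exact Submodule.mem_iSup_of_mem 0 (Submodule.smul_mem _ _ (Submodule.subset_span rfl))
  · exact Submodule.mem_iSup_of_mem 1 (Submodule.smul_mem _ _ (Submodule.subset_span rfl))
  · exact Submodule.mem_iSup_of_mem 2 (Submodule.smul_mem _ _ (Submodule.subset_span rfl))

lemma riesz_W : IsFusionRieszBasisR
    (![Submodule.span ℝ {eb 0}, Submodule.span ℝ {eb 0 + eb 1},
      Submodule.span ℝ {eb 2}] : Fin 3 → Submodule ℝ Efr) := by
  constructor
  · rw [eq_top_iff]
    exact sup_W_top ▸ Submodule.le_topologicalClosure _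
  · refine ⟨1/2, Real.sqrt 2, by norm_num, ?_, ?_⟩
    · rw [show (1:ℝ)/2 = Real.sqrt (1/4) by
        rw [show (1:ℝ)/4 = (1/2)^2 by norm_num, Real.sqrt_sq]; norm_num]
      exact Real.sqrt_le_sqrt (by norm_num)
    intro J f hf
    set g : Fin 3 → Efr := fun j => if j ∈ J then f j else 0 with hg
    have hsum : ∑ j ∈ J, f j = ∑ j : Fin 3, g j := by
      rw [Finset.sum_ite_mem, Finset.univ_inter]
    have hsumn : ∑ j ∈ J, ‖f j‖ ^ 2 = ∑ j : Fin 3, ‖g j‖ ^ 2 := by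
      have hgn : ∀ j, ‖g j‖ ^ 2 = if j ∈ J then ‖f j‖ ^ 2 else 0 := fun j => by
        by_cases h : j ∈ J <;> simp [hg, h]
      simp_rw [hgn]
      rw [Finset.sum_ite_mem, Finset.univ_inter]
    have hgmem : ∀ j, g j ∈ (![Submodule.span ℝ {eb 0}, Submodule.span ℝ {eb 0 + eb 1},
        Submodule.span ℝ {eb 2}] : Fin 3 → Submodule ℝ Efr) j := by
      intro j; by_cases h : j ∈ J
      · simpa [hg, h] using hf j
      · simp [hg, h]
    obtain ⟨a, ha⟩ := Submodule.mem_span_singleton.mp (hgmem 0)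
    obtain ⟨b, hb⟩ := Submodule.mem_span_singleton.mp (hgmem 1)
    obtain ⟨c, hc⟩ := Submodule.mem_span_singleton.mp (hgmem 2)
    have hS : ∑ j : Fin 3, g j = a • eb 0 + b • (eb 0 + eb 1) + c • eb 2 := by
      rw [Fin.sum_univ_three, ← ha, ← hb, ← hc]
    have hN : ∑ j : Fin 3, ‖g j‖ ^ 2 = a^2 + 2*b^2 + c^2 := by
      rw [Fin.sum_univ_three, ← ha, ← hb, ← hc]
      rw [norm_smul, norm_smul, norm_smul, mul_pow, mul_pow, mul_pow]
      rw [Real.norm_eq_abs, Real.norm_eq_abs, Real.norm_eq_abs, sq_abs, sq_abs, sq_abs,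
        norm_sq_e01]
      simp [EuclideanSpace.norm_single]
      ring
    rw [hsum, hsumn, hS, hN, normW_eq]
    have hP : (0:ℝ) ≤ a^2 + 2*b^2 + c^2 := by positivity
    constructor
    · exact sqrt_mul_le_sqrt (by norm_num) (by nlinarith [sq_nonneg (a+2*b), sq_nonneg b])
    · have h2 : Real.sqrt ((a+b)^2 + b^2 + c^2) ≤
          Real.sqrt 2 * Real.sqrt (a^2 + 2*b^2 + c^2) := by
        rw [← Real.sqrt_mul (by norm_num)]
        exact Real.sqrt_le_sqrt (by nlinarith [sq_nonneg (a - b)])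
      exact h2

lemma swCLE_eq_sum (f : Efr) :
    swCLE f = ∑ i : Fin 3, fusionProjR
      ((![Submodule.span ℝ {eb 0}, Submodule.span ℝ {eb 0 + eb 1},
        Submodule.span ℝ {eb 2}] : Fin 3 → Submodule ℝ Efr) i) f := by
  rw [Fin.sum_univ_three]
  simp only [Matrix.cons_val_zero, Matrix.cons_val_one, Matrix.head_cons, Matrix.cons_val_two,
    Matrix.tail_cons]
  rw [proj_e 0, proj_e01, proj_e 2]
  ext i
  fin_cases i <;>
    simp [swCLE_apply, EuclideanSpace.single_apply, PiLp.add_apply, PiLp.smul_apply] <;> ring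

lemma dual_identity (f : Efr) :
    ∑ i : Fin 3, fusionProjR
      ((![Submodule.span ℝ {eb 0, eb 1}, Submodule.span ℝ {eb 1},
        Submodule.span ℝ {eb 2}] : Fin 3 → Submodule ℝ Efr) i)
      (swCLE.symm (fusionProjR
        ((![Submodule.span ℝ {eb 0}, Submodule.span ℝ {eb 0 + eb 1},
          Submodule.span ℝ {eb 2}] : Fin 3 → Submodule ℝ Efr) i) f)) = f := by
  rw [Fin.sum_univ_three]
  simp only [Matrix.cons_val_zero, Matrix.cons_val_one, Matrix.head_cons, Matrix.cons_val_two,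
    Matrix.tail_cons]
  have h0 : swCLE.symm ((f 0) • eb 0) = (f 0) • eb 0 + (-(f 0)) • eb 1 := by
    ext i
    fin_cases i <;>
      simp [swCLE_symm_apply, EuclideanSpace.single_apply, PiLp.smul_apply]
  have h1 : swCLE.symm (((f 0 + f 1) / 2) • (eb 0 + eb 1)) = (f 0 + f 1) • eb 1 := by
    ext i
    fin_cases i <;>
      simp [swCLE_symm_apply, EuclideanSpace.single_apply, PiLp.smul_apply, PiLp.add_apply] <;>
      ring
  have h2 : swCLE.symm ((f 2) • eb 2) = (f 2) • eb 2 := by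
    ext i
    fin_cases i <;>
      simp [swCLE_symm_apply, EuclideanSpace.single_apply, PiLp.smul_apply]
  have t0 : fusionProjR (Submodule.span ℝ {eb 0, eb 1})
      (swCLE.symm (fusionProjR (Submodule.span ℝ {eb 0}) f)) = (f 0) • eb 0 + (-(f 0)) • eb 1 := by
    rw [proj_e 0 f, h0]
    exact fusionProjR_of_mem _ (add_mem
      (Submodule.smul_mem _ _ (Submodule.subset_span (Set.mem_insert _ _)))
      (Submodule.smul_mem _ _ (Submodule.subset_span (Set.mem_insert_of_mem _ rfl))))
  have t1 : fusionProjR (Submodule.span ℝ {eb 1})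
      (swCLE.symm (fusionProjR (Submodule.span ℝ {eb 0 + eb 1}) f)) = (f 0 + f 1) • eb 1 := by
    rw [proj_e01 f, h1]
    exact fusionProjR_of_mem _ (Submodule.smul_mem _ _ (Submodule.subset_span rfl))
  have t2 : fusionProjR (Submodule.span ℝ {eb 2})
      (swCLE.symm (fusionProjR (Submodule.span ℝ {eb 2}) f)) = (f 2) • eb 2 := by
    rw [proj_e 2 f, h2]
    exact fusionProjR_of_mem _ (Submodule.smul_mem _ _ (Submodule.subset_span rfl))
  rw [t0, t1, t2]
  ext i
  fin_cases i <;>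
    simp [EuclideanSpace.single_apply, PiLp.add_apply, PiLp.smul_apply]

lemma V0_ne_map : Submodule.span ℝ {eb 0, eb 1} ≠
    (Submodule.span ℝ {eb 0}).map
      ((swCLE.symm : Efr →L[ℝ] Efr) : Efr →ₗ[ℝ] Efr) := by
  intro h
  have h1 : eb 1 ∈ Submodule.span ℝ {eb 0, eb 1} :=
    Submodule.subset_span (Set.mem_insert_of_mem _ rfl)
  rw [h] at h1
  obtain ⟨w, hw, hsw⟩ := h1
  obtain ⟨a, ha⟩ := Submodule.mem_span_singleton.mp hw
  rw [← ha] at hsw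
  have hsw' : swCLE.symm (a • eb 0) = eb 1 := hsw
  have h00 : swCLE.symm (a • eb 0) 0 = a := by
    simp [swCLE_symm_apply, EuclideanSpace.single_apply, PiLp.smul_apply]
  have h01 : swCLE.symm (a • eb 0) 1 = -a := by
    simp [swCLE_symm_apply, EuclideanSpace.single_apply, PiLp.smul_apply]
  rw [hsw'] at h00 h01
  simp [eb, EuclideanSpace.single_apply] at h00 h01
  rw [← h00] at h01
  norm_num at h01

lemma not_riesz_V : ¬ IsFusionRieszBasisR
    (![Submodule.span ℝ {eb 0, eb 1}, Submodule.span ℝ {eb 1},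
      Submodule.span ℝ {eb 2}] : Fin 3 → Submodule ℝ Efr) := by
  rintro ⟨-, C, D, hC, -, hbd⟩
  have hmem : ∀ j, (![eb 1, -eb 1, 0] : Fin 3 → Efr) j ∈
      (![Submodule.span ℝ {eb 0, eb 1}, Submodule.span ℝ {eb 1},
        Submodule.span ℝ {eb 2}] : Fin 3 → Submodule ℝ Efr) j := by
    intro j
    fin_cases j
    · exact Submodule.subset_span (Set.mem_insert_of_mem _ rfl)
    · exact neg_mem (Submodule.subset_span rfl)
    · exact zero_mem _
  obtain ⟨hlow, -⟩ := hbd Finset.univ _ hmem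
  rw [Fin.sum_univ_three, Fin.sum_univ_three] at hlow
  simp only [Matrix.cons_val_zero, Matrix.cons_val_one, Matrix.head_cons, Matrix.cons_val_two,
    Matrix.tail_cons] at hlow
  have hz : eb 1 + -eb 1 + 0 = (0 : Efr) := by abel
  rw [hz] at hlow
  simp [EuclideanSpace.norm_single] at hlow
  have : Real.sqrt (1 + 1) > 0 := Real.sqrt_pos.mpr (by norm_num)
  nlinarith

/-- There is a fusion Riesz basis of `ℝ³` admitting an alternate dual fusion frame
distinct from its canonical dual, and that alternate dual is not a fusion Riesz basis.
Concretely `W₁ = span{(1,0,0)}`, `W₂ = span{(1,1,0)}`, `W₃ = span{(0,0,1)}` and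
`V₁ = ℝ²×{0}`, `V₂ = span{(0,1,0)}`, `V₃ = span{(0,0,1)}`. -/
theorem fusion_riesz_basis_with_non_riesz_alternate_dual :
    ∃ W V : Fin 3 → Submodule ℝ (EuclideanSpace ℝ (Fin 3)),
      W = ![Submodule.span ℝ {EuclideanSpace.single 0 (1 : ℝ)},
            Submodule.span ℝ {(EuclideanSpace.single 0 (1 : ℝ) + EuclideanSpace.single 1 (1 : ℝ))},
            Submodule.span ℝ {EuclideanSpace.single 2 (1 : ℝ)}] ∧
      V = ![Submodule.span ℝ {EuclideanSpace.single 0 (1 : ℝ), EuclideanSpace.single 1 (1 : ℝ)},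
            Submodule.span ℝ {EuclideanSpace.single 1 (1 : ℝ)},
            Submodule.span ℝ {EuclideanSpace.single 2 (1 : ℝ)}] ∧
      IsFusionRieszBasisR W ∧
      ∃ SW : EuclideanSpace ℝ (Fin 3) ≃L[ℝ] EuclideanSpace ℝ (Fin 3),
        (∀ f, SW f = ∑ i : Fin 3, fusionProjR (W i) f) ∧
        (∀ f : EuclideanSpace ℝ (Fin 3),
          ∑ i : Fin 3, fusionProjR (V i) (SW.symm (fusionProjR (W i) f)) = f) ∧
        (∃ i : Fin 3, V i ≠ (W i).map ((SW.symm : EuclideanSpace ℝ (Fin 3) →L[ℝ] EuclideanSpace ℝ (Fin 3)) : EuclideanSpace ℝ (Fin 3) →ₗ[ℝ] EuclideanSpace ℝ (Fin 3))) ∧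
        ¬ IsFusionRieszBasisR V := by
  refine ⟨_, _, rfl, rfl, riesz_W, swCLE, swCLE_eq_sum, dual_identity, ⟨0, ?_⟩, not_riesz_V⟩
  exact V0_ne_map
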